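/- Let f : ℕ → ℝ be any function with f(N) → ∞ as N → ∞. Then there exists N₀ such that for all N ≥ N₀ and all integers i with f(N) ≤ i ≤ N−1, one has T_i((i + √i)/√(N − i + 3)) ≤ (i − 1 + √(i−1))/√(N − i + 4). -/

import Mathlib

open Filter Real

/-- For an integer `i ≥ 1` and real `t`, `T_i(t) = (−t³ + 2t² + 2i²t)/(2i(i+1))`. -/
noncomputable def Tfun (i : ℕ) (t : ℝ) : ℝ :=
  (-t ^ 3 + 2 * t ^ 2 + 2 * (i : ℝ) ^ 2 * t) / (2 * (i : ℝ) * ((i : ℝ) + 1))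

private lemma core_poly (p : ℝ) (hp : 32 ≤ p) :
    0 ≤ 4*p^3 + 4*p^4 + 4*p^5 + 4*p^6 - 48*p^7 - 176*p^8 - 224*p^9 - 80*p^10 + 16*p^11 := by
  have h0 : 0 < p := by linarith
  nlinarith [pow_pos h0 7, pow_pos h0 8, pow_pos h0 9, pow_pos h0 10,
    mul_le_mul_of_nonneg_left hp (le_of_lt (pow_pos h0 10)),
    mul_le_mul_of_nonneg_left hp (le_of_lt (pow_pos h0 9)),
    mul_le_mul_of_nonneg_left hp (le_of_lt (pow_pos h0 8)),
    mul_le_mul_of_nonneg_left hp (le_of_lt (pow_pos h0 7))]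

private lemma core (r p q t : ℝ) (hp : 32 ≤ p) (hr : p^2 = r) (hq0 : 0 ≤ q)
    (hq : q^2 = r - 1) :
    (2*r^2 + 1 - (t-1)^2) * (2*(r+p)^2 + t^2) ≤ 4*(r+p)*(r*(r+1))*(r-1+q) := by
  subst hr
  have h0 : 0 < p := by linarith
  have hD : (0:ℝ) < 4*p^3 + 2*p^2 - 1 := by nlinarith [pow_pos h0 3, pow_pos h0 2]
  have hp2ge : (1024:ℝ) ≤ p^2 := by nlinarith
  have hy : (0:ℝ) < 4*p^4 - 2*p^2 - 1 := by nlinarith [pow_pos h0 2, pow_pos h0 4]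
  have hx2 : (4*p^3*q)^2 = 16*p^6*(q^2) := by ring
  rw [hq] at hx2
  have hyx : (0:ℝ) < 4*p^4 - 2*p^2 - 1 + 4*p^3*q := by positivity
  have hq4 : 4*p^4 - 2*p^2 - 1 ≤ 4*p^3*q := by
    nlinarith [hx2, hyx, hp2ge, pow_pos h0 2, pow_pos h0 4]
  have h1 : 0 ≤ 4*p^3 * ((4*p^3 + 2*p^2 - 1)*t - 2*(p^2+p)^2)^2 :=
    mul_nonneg (by positivity) (sq_nonneg _)
  have h2 : 0 ≤ 4*p^3 * (4*p^3 + 2*p^2 - 1) * ((t-1)^2 * t^2) :=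
    mul_nonneg (mul_nonneg (by positivity) (le_of_lt hD))
      (mul_nonneg (sq_nonneg _) (sq_nonneg _))
  have h3 : 0 ≤ (4*p^3*q - (4*p^4 - 2*p^2 - 1)) *
      (4*(p^2+p)*(p^2*(p^2+1))*(4*p^3 + 2*p^2 - 1)) := by
    apply mul_nonneg (by linarith)
    positivity
  have h4 := core_poly p hp
  have hc : 0 < 4*p^3 * (4*p^3 + 2*p^2 - 1) := by positivity
  have H : (4*p^3 * (4*p^3 + 2*p^2 - 1)) * ((2*(p^2)^2 + 1 - (t-1)^2) * (2*(p^2+p)^2 + t^2))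
      ≤ (4*p^3 * (4*p^3 + 2*p^2 - 1)) * (4*(p^2+p)*(p^2*(p^2+1))*(p^2-1+q)) := by
    nlinarith [h1, h2, h3, h4]
  exact le_of_mul_le_mul_left H hc

set_option maxHeartbeats 2000000 in
private lemma key (i N : ℕ) (hi : 1024 ≤ i) (hN : (i : ℝ) ≤ (N : ℝ) - 1) :
    Tfun i (((i : ℝ) + Real.sqrt i) / Real.sqrt ((N : ℝ) - i + 3)) ≤
      ((i : ℝ) - 1 + Real.sqrt ((i : ℝ) - 1)) / Real.sqrt ((N : ℝ) - i + 4) := by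
  set r : ℝ := (i : ℝ) with hrdef
  have hr : (1024:ℝ) ≤ r := by rw [hrdef]; exact_mod_cast hi
  set p : ℝ := Real.sqrt r with hpdef
  set q : ℝ := Real.sqrt (r - 1) with hqdef
  have hp0 : 0 ≤ p := Real.sqrt_nonneg r
  have hp2 : p^2 = r := Real.sq_sqrt (by linarith)
  have hq0 : 0 ≤ q := Real.sqrt_nonneg _
  have hq2 : q^2 = r - 1 := Real.sq_sqrt (by linarith)
  have hp : 32 ≤ p := by nlinarith [sq_nonneg (p - 32)]
  set s : ℝ := (N : ℝ) - r + 3 with hsdef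
  have hs4 : (4:ℝ) ≤ s := by rw [hsdef]; linarith
  set v : ℝ := Real.sqrt s with hvdef
  have hv0 : 0 ≤ v := Real.sqrt_nonneg s
  have hv2 : v^2 = s := Real.sq_sqrt (by linarith)
  have hv : 2 ≤ v := by nlinarith [sq_nonneg (v - 2)]
  have e4 : (N : ℝ) - r + 4 = s + 1 := by rw [hsdef]; ring
  rw [e4]
  set w : ℝ := Real.sqrt (s + 1) with hwdef
  have hw0 : 0 ≤ w := Real.sqrt_nonneg _
  have hw2 : w^2 = s + 1 := Real.sq_sqrt (by linarith)
  have hw : 0 < w := by nlinarith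
  set a : ℝ := r + p with hadef
  have ha : 0 < a := by rw [hadef]; linarith
  set t : ℝ := a / v with htdef
  have ht0 : 0 < t := div_pos ha (by linarith)
  have htv : t * v = a := div_mul_cancel₀ a (by linarith : v ≠ 0)
  have htw2 : (t*w)^2 = a^2 + t^2 := by
    have e1 : (t*w)^2 = t^2 * (s+1) := by rw [mul_pow, hw2]
    rw [e1, ← hv2]
    linear_combination (t*v + a) * htv
  have htw0 : 0 ≤ t * w := mul_nonneg (le_of_lt ht0) hw0
  have htwle : 2*a*(t*w) ≤ 2*a^2 + t^2 := by
    have hXY : (0:ℝ) < 2*a^2 + t^2 + 2*a*(t*w) := by positivity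
    nlinarith [htw2, hXY, pow_pos ht0 2, pow_pos ht0 4]
  rw [Tfun]
  rw [div_le_div_iff₀ (by nlinarith : (0:ℝ) < 2 * r * (r + 1)) hw]
  rw [← hrdef]
  have hlhs : (-t^3 + 2*t^2 + 2*r^2*t) * w = (t*w) * (2*r^2 + 1 - (t-1)^2) := by ring
  rw [hlhs]
  rcases le_or_gt (2*r^2 + 1 - (t-1)^2) 0 with h | h
  · have h1 : (t*w) * (2*r^2 + 1 - (t-1)^2) ≤ 0 := mul_nonpos_of_nonneg_of_nonpos htw0 h
    have h2 : (0:ℝ) ≤ (r - 1 + q) * (2 * r * (r + 1)) := by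
      apply mul_nonneg (by linarith) (by nlinarith)
    linarith
  · have hcore := core r p q t hp hp2 hq0 hq2
    rw [← hadef] at hcore
    have step1 : (t*w) * (2*r^2 + 1 - (t-1)^2) ≤ ((2*a^2 + t^2)/(2*a)) * (2*r^2 + 1 - (t-1)^2) := by
      apply mul_le_mul_of_nonneg_right _ (le_of_lt h)
      rw [le_div_iff₀ (by linarith : (0:ℝ) < 2*a)]
      linarith [htwle]
    have step2 : ((2*a^2 + t^2)/(2*a)) * (2*r^2 + 1 - (t-1)^2) ≤ (r - 1 + q) * (2 * r * (r + 1)) := by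
      rw [div_mul_eq_mul_div, div_le_iff₀ (by linarith : (0:ℝ) < 2*a)]
      nlinarith [hcore]
    linarith

/-- Induction-step inequality for the upper bound lemma. -/
theorem Tfun_induction_step (f : ℕ → ℝ) (hf : Tendsto f atTop atTop) :
    ∃ N₀ : ℕ, ∀ N : ℕ, N₀ ≤ N → ∀ i : ℕ,
      f N ≤ (i : ℝ) → (i : ℝ) ≤ (N : ℝ) - 1 →
      Tfun i (((i : ℝ) + Real.sqrt i) / Real.sqrt ((N : ℝ) - i + 3)) ≤
        ((i : ℝ) - 1 + Real.sqrt ((i : ℝ) - 1)) / Real.sqrt ((N : ℝ) - i + 4) := by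
  obtain ⟨N₀, hN₀⟩ := Filter.eventually_atTop.1 (Filter.tendsto_atTop.1 hf 1024)
  refine ⟨N₀, fun N hN i hfi hiN => ?_⟩
  have h1 : (1024:ℝ) ≤ (i:ℝ) := le_trans (hN₀ N hN) hfi
  have h2 : (1024:ℕ) ≤ i := by exact_mod_cast h1
  exact key i N h2 hiN
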